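/- Let u, v, f: M → R be smooth with v > 0, and fix α, β > 0. Set h = -log(v^{2α}) + f. Then Δ_h(u^β/v^α) = (u^{β-1}/v^{α+1})·{β v Δ_f u - α u Δ_f v + β(β-1) v |∇u|^2/u - α(α-1) u |∇v|^2/v}, where Δ_g w := Δw - ⟨∇g, ∇w⟩ denotes the drift Laplacian with weight g. -/
import Mathlib


/-- **Drift Laplacian of the quotient `u^β / v^α`.**
On a Riemannian manifold `M`, `Δ` denotes the Laplace–Beltrami operator and
`G a b = ⟨∇a, ∇b⟩` the inner product of gradients, so that the drift Laplacian with
weight `g` is `Δ_g w = Δ w - G g w`.  The hypotheses encode the standard calculus rules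
(symmetry and additivity of `G`, Leibniz rules, and chain rules for real powers and
logarithms of positive functions).  Given smooth `u, v, f : M → ℝ` with `v > 0`
(and `u > 0` where differentiated), `α, β > 0`, and `h = -log(v^{2α}) + f`, we have
`Δ_h (u^β/v^α) = (u^{β-1}/v^{α+1}) { β v Δ_f u - α u Δ_f v
  + β(β-1) v |∇u|^2/u - α(α-1) u |∇v|^2/v }`. -/
theorem drift_laplacian_quotient (M : Type*)
    (Δ : (M → ℝ) → (M → ℝ))
    (G : (M → ℝ) → (M → ℝ) → (M → ℝ))
    (u v f : M → ℝ) (hu : ∀ p, 0 < u p) (hv : ∀ p, 0 < v p)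
    (α β : ℝ) (hα : 0 < α) (hβ : 0 < β)
    (Gsymm : ∀ a b, G a b = G b a)
    (Gadd : ∀ a b c p, G (fun q => a q + b q) c p = G a c p + G b c p)
    (Gneg : ∀ a b p, G (fun q => -a q) b p = -G a b p)
    (Gmul : ∀ a b c p, G (fun q => a q * b q) c p = a p * G b c p + b p * G a c p)
    (Grpow : ∀ (a b : M → ℝ) (c : ℝ) p, 0 < a p →
      G (fun q => a q ^ c) b p = c * a p ^ (c - 1) * G a b p)
    (Glog : ∀ (a b : M → ℝ) p, 0 < a p →
      G (fun q => Real.log (a q)) b p = G a b p / a p)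
    (Δmul : ∀ a b p,
      Δ (fun q => a q * b q) p = a p * Δ b p + b p * Δ a p + 2 * G a b p)
    (Δrpow : ∀ (a : M → ℝ) (c : ℝ) p, 0 < a p →
      Δ (fun q => a q ^ c) p
        = c * a p ^ (c - 1) * Δ a p + c * (c - 1) * a p ^ (c - 2) * G a a p) :
    ∀ p,
      Δ (fun q => u q ^ β / v q ^ α) p
        - G (fun q => -Real.log (v q ^ (2 * α)) + f q) (fun q => u q ^ β / v q ^ α) p
      = (u p ^ (β - 1) / v p ^ (α + 1)) *
          (β * v p * (Δ u p - G f u p) - α * u p * (Δ v p - G f v p)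
            + β * (β - 1) * v p * (G u u p / u p)
            - α * (α - 1) * u p * (G v v p / v p)) := by

  intro p
  have hx := hu p
  have hy := hv p
  have key : (fun q => u q ^ β / v q ^ α) = fun q => u q ^ β * v q ^ (-α) := by
    funext q
    rw [Real.rpow_neg (hv q).le, div_eq_mul_inv]
  rw [key]
  rw [Δmul (fun q => u q ^ β) (fun q => v q ^ (-α)) p,
      Δrpow u β p hx, Δrpow v (-α) p hy,
      Gadd (fun q => -Real.log (v q ^ (2 * α))) f (fun q => u q ^ β * v q ^ (-α)) p,
      Gneg (fun q => Real.log (v q ^ (2 * α))) (fun q => u q ^ β * v q ^ (-α)) p,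
      Glog (fun q => v q ^ (2 * α)) (fun q => u q ^ β * v q ^ (-α)) p
        (Real.rpow_pos_of_pos hy _),
      Grpow v (fun q => u q ^ β * v q ^ (-α)) (2 * α) p hy,
      Gsymm v (fun q => u q ^ β * v q ^ (-α)),
      Gsymm f (fun q => u q ^ β * v q ^ (-α)),
      Gmul (fun q => u q ^ β) (fun q => v q ^ (-α)) v p,
      Gmul (fun q => u q ^ β) (fun q => v q ^ (-α)) f p,
      Grpow u (fun q => v q ^ (-α)) β p hx,
      Grpow u v β p hx, Grpow u f β p hx,
      Grpow v v (-α) p hy, Grpow v f (-α) p hy,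
      Gsymm u (fun q => v q ^ (-α)),
      Grpow v u (-α) p hy]
  rw [Gsymm u v, Gsymm u f, Gsymm v f] at *
  have e1 : u p ^ (β - 1) = u p ^ β / u p := by
    rw [Real.rpow_sub hx, Real.rpow_one]
  have e2 : u p ^ (β - 2) = u p ^ β / (u p * u p) := by
    rw [show β - 2 = β - 1 - 1 by ring, Real.rpow_sub hx, Real.rpow_sub hx,
      Real.rpow_one, div_div]
  have e3 : v p ^ (-α) = 1 / v p ^ α := by
    rw [Real.rpow_neg hy.le, one_div]
  have e4 : v p ^ (-α - 1) = 1 / (v p ^ α * v p) := by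
    rw [show -α - 1 = -(α + 1) by ring, Real.rpow_neg hy.le, Real.rpow_add hy,
      Real.rpow_one, one_div]
  have e5 : v p ^ (-α - 2) = 1 / (v p ^ α * (v p * v p)) := by
    rw [show -α - 2 = -(α + 1 + 1) by ring, Real.rpow_neg hy.le, Real.rpow_add hy,
      Real.rpow_add hy, Real.rpow_one, one_div, mul_assoc]
  have e6 : v p ^ (2 * α) = v p ^ α * v p ^ α := by
    rw [two_mul, Real.rpow_add hy]
  have e8 : v p ^ (2 * α - 1) = v p ^ α * v p ^ α / v p := by
    rw [Real.rpow_sub hy, Real.rpow_one, two_mul, Real.rpow_add hy]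
  have e7 : v p ^ (α + 1) = v p ^ α * v p := by
    rw [Real.rpow_add hy, Real.rpow_one]
  rw [e1, e2, e3, e4, e5, e6, e7, e8]
  have hxβ : u p ^ β ≠ 0 := (Real.rpow_pos_of_pos hx β).ne'
  have hyα : v p ^ α ≠ 0 := (Real.rpow_pos_of_pos hy α).ne'
  field_simp
  ring
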